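/- Let Γ be a stable translation quiver containing a ray, i.e., an infinite sectional path x₀ → x₁ → x₂ → ⋯ of pairwise distinct vertices such that each x_{i+1} lies in a τ-orbit distinct from those of x₀, …, x_i. If Σ is a presection in Γ containing x₀, then for each i ≥ 0 at least one of τⁱx_i, τ^{i−1}x_i, …, τ⁰x_i belongs to Σ. Consequently, Σ is infinite. -/

import Mathlib

/- STATEMENT 9: In a stable translation quiver containing a ray x₀ → x₁ → x₂ → ⋯
   (an infinite sectional path of pairwise distinct vertices, each new vertex in a
   new τ-orbit), any presection Σ containing x₀ satisfies: for each i ≥ 0 one of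
   τⁱx_i, …, τ⁰x_i lies in Σ. Consequently Σ is infinite. -/

namespace Stmt9

theorem presection_containing_ray_start_is_infinite
    {V : Type*} (Arrow : V → V → Prop) (τ : Equiv.Perm V)
    -- stable translation quiver: for every arrow u → v there are arrows
    -- τv → u, v → τ⁻¹u and τu → τv
    (hmesh₁ : ∀ u v, Arrow u v → Arrow (τ v) u)
    (hmesh₂ : ∀ u v, Arrow u v → Arrow v (τ.symm u))
    (hmesh₃ : ∀ u v, Arrow u v → Arrow (τ u) (τ v))
    -- a ray: an infinite sectional path of pairwise distinct vertices
    (x : ℕ → V)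
    (hdist : Function.Injective x)
    (hray : ∀ i, Arrow (x i) (x (i + 1)))
    (hsec : ∀ i, 1 ≤ i → τ (x (i + 1)) ≠ x (i - 1))
    -- each x_{i+1} lies in a τ-orbit distinct from those of x₀, …, x_i
    (horb : ∀ i, ∀ j ≤ i, ∀ n : ℤ, (τ ^ n) (x j) ≠ x (i + 1))
    (S : Set V)
    -- Σ is a connected full subquiver which is a presection containing x₀
    (hSconn : ∀ u ∈ S, ∀ v ∈ S, Relation.ReflTransGen
      (fun a b => a ∈ S ∧ b ∈ S ∧ (Arrow a b ∨ Arrow b a)) u v)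
    (hP1 : ∀ u v, Arrow u v → u ∈ S → v ∈ S ∨ τ v ∈ S)
    (hP2 : ∀ u v, Arrow u v → v ∈ S → u ∈ S ∨ τ.symm u ∈ S)
    (hx0 : x 0 ∈ S) :
    -- conclusion: for each i, some τᵏx_i with 0 ≤ k ≤ i lies in Σ, and Σ is infinite
    (∀ i : ℕ, ∃ k ≤ i, (τ ^ (k : ℕ)) (x i) ∈ S) ∧ S.Infinite := by
  have arrow_pow : ∀ (k : ℕ) (u v : V), Arrow u v → Arrow ((τ ^ k) u) ((τ ^ k) v) := by
    intro k
    induction k with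
    | zero => intro u v h; simpa using h
    | succ n ih =>
        intro u v h
        have := hmesh₃ _ _ (ih u v h)
        simpa [pow_succ', Equiv.Perm.mul_apply] using this
  have main : ∀ i : ℕ, ∃ k ≤ i, (τ ^ (k : ℕ)) (x i) ∈ S := by
    intro i
    induction i with
    | zero => exact ⟨0, le_refl 0, by simpa using hx0⟩
    | succ n ih =>
        obtain ⟨k, hk, hkS⟩ := ih
        have harr : Arrow ((τ ^ k) (x n)) ((τ ^ k) (x (n + 1))) :=
          arrow_pow k _ _ (hray n)
        rcases hP1 _ _ harr hkS with h | h
        · exact ⟨k, by omega, h⟩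
        · refine ⟨k + 1, by omega, ?_⟩
          have : (τ ^ (k + 1)) (x (n + 1)) = τ ((τ ^ k) (x (n + 1))) := by
            rw [pow_succ']; rfl
          rw [this]; exact h
    -- injectivity of chosen elements
  refine ⟨main, ?_⟩
  classical
  choose k hk hkS using main
  have key : ∀ i j : ℕ, i < j → (τ ^ (k i : ℕ)) (x i) ≠ (τ ^ (k j : ℕ)) (x j) := by
    intro i j hlt hij
    have hz : (τ ^ ((k i : ℤ) - (k j : ℤ))) (x i) = x j := by
      have h1 : (τ ^ ((k i : ℤ))) (x i) = (τ ^ ((k j : ℤ))) (x j) := by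
        simpa [zpow_natCast] using hij
      have := congrArg (fun y => (τ ^ (-(k j : ℤ))) y) h1
      calc (τ ^ ((k i : ℤ) - (k j : ℤ))) (x i)
          = (τ ^ (-(k j : ℤ)) * τ ^ ((k i : ℤ))) (x i) := by
            rw [← zpow_add]; ring_nf
        _ = (τ ^ (-(k j : ℤ))) ((τ ^ ((k i : ℤ))) (x i)) := rfl
        _ = (τ ^ (-(k j : ℤ))) ((τ ^ ((k j : ℤ))) (x j)) := by rw [h1]
        _ = (τ ^ (-(k j : ℤ) + (k j : ℤ))) (x j) := by rw [zpow_add]; rfl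
        _ = x j := by simp
    have hj1 : j - 1 + 1 = j := by omega
    exact horb (j - 1) i (by omega) ((k i : ℤ) - (k j : ℤ)) (by rw [hj1]; exact hz)
  have hinj : Function.Injective (fun i => (τ ^ (k i : ℕ)) (x i)) := by
    intro i j hij
    by_contra hne
    rcases lt_or_gt_of_ne hne with h | h
    · exact key i j h hij
    · exact key j i h hij.symm
  exact Set.infinite_of_injective_forall_mem hinj (fun i => hkS i)

end Stmt9
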